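/- Let t_L, t_R ∈ ℂ be nonzero, N ≥ 1, and let θ = π/(N+1), ℓ ∈ {1,…,N}. Fix a square root s of t_L/t_R and set z_1 = s·e^{iθℓ}, z_2 = s·e^{-iθℓ}, E = t_R(z_1 + z_2) = 2 s t_R cos(θℓ). Define ψ_m = -(t_L/(t_R(z_1 - z_2)))·(z_1^{-m} - z_2^{-m}) for 0 ≤ m ≤ N+1. Then ψ satisfies t_R ψ_{m-1} + t_L ψ_{m+1} = E ψ_m for all 1 ≤ m ≤ N, and ψ_0 = 0 and ψ_{N+1} = 0. -/

import Mathlib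

open Complex

theorem hatano_nelson_obc_eigenstates
    (N : ℕ) (hN : 1 ≤ N) (tL tR : ℂ) (htL : tL ≠ 0) (htR : tR ≠ 0)
    (s : ℂ) (hs : s ^ 2 = tL / tR)
    (θ : ℝ) (hθ : θ = Real.pi / (N + 1))
    (ℓ : ℕ) (hℓ₁ : 1 ≤ ℓ) (hℓ₂ : ℓ ≤ N)
    (z₁ z₂ E : ℂ)
    (hz₁ : z₁ = s * Complex.exp (Complex.I * θ * ℓ))
    (hz₂ : z₂ = s * Complex.exp (-(Complex.I * θ * ℓ)))
    (hE : E = tR * (z₁ + z₂))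
    (ψ : ℕ → ℂ)
    (hψ : ∀ m : ℕ, ψ m = -(tL / (tR * (z₁ - z₂))) * ((z₁⁻¹) ^ m - (z₂⁻¹) ^ m)) :
    (∀ m : ℕ, 1 ≤ m → m ≤ N →
      tR * ψ (m - 1) + tL * ψ (m + 1) = E * ψ m) ∧
    ψ 0 = 0 ∧ ψ (N + 1) = 0 := by
  have hs0 : s ≠ 0 := by
    intro h
    have h0 : tL / tR = 0 := by rw [← hs, h]; ring
    rcases div_eq_zero_iff.mp h0 with h' | h'
    · exact htL h'
    · exact htR h'
  have hz1ne : z₁ ≠ 0 := by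
    rw [hz₁]; exact mul_ne_zero hs0 (Complex.exp_ne_zero _)
  have hz2ne : z₂ ≠ 0 := by
    rw [hz₂]; exact mul_ne_zero hs0 (Complex.exp_ne_zero _)
  have hprod : z₁ * z₂ = tL / tR := by
    rw [hz₁, hz₂, ← hs]
    rw [mul_mul_mul_comm, ← Complex.exp_add]
    simp
    ring
  have htL' : tL = tR * (z₁ * z₂) := by
    rw [hprod]; field_simp
  have key1 : ∀ k : ℕ, tR * (z₁⁻¹) ^ k + tL * (z₁⁻¹) ^ (k + 2) = E * (z₁⁻¹) ^ (k + 1) := by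
    intro k
    rw [hE, htL']
    field_simp
    linear_combination (z₁⁻¹ * z₁⁻¹ ^ k * z₂ - z₁⁻¹ ^ k) * mul_inv_cancel₀ hz1ne
  have key2 : ∀ k : ℕ, tR * (z₂⁻¹) ^ k + tL * (z₂⁻¹) ^ (k + 2) = E * (z₂⁻¹) ^ (k + 1) := by
    intro k
    rw [hE, htL']
    field_simp
    linear_combination (z₂⁻¹ * z₂⁻¹ ^ k * z₁ - z₂⁻¹ ^ k) * mul_inv_cancel₀ hz2ne
  refine ⟨?_, ?_, ?_⟩
  · intro m h1 h2
    obtain ⟨k, rfl⟩ := Nat.exists_eq_add_of_le h1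
    have hm1 : 1 + k - 1 = k := by omega
    rw [hm1, hψ, hψ, hψ]
    have e1 := key1 k
    have e2 := key2 k
    set C := -(tL / (tR * (z₁ - z₂)))
    have h12 : 1 + k + 1 = k + 2 := by omega
    have h11 : 1 + k = k + 1 := by omega
    rw [h12, h11]
    linear_combination C * e1 - C * e2
  · rw [hψ]; simp
  · -- z₁^(N+1) = z₂^(N+1)
    have hπ : (θ : ℂ) * (N + 1) = Real.pi := by
      have : θ * (N + 1) = Real.pi := by
        rw [hθ]; field_simp
      calc (θ : ℂ) * (N + 1) = ((θ * (N + 1) : ℝ) : ℂ) := by push_cast; ring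
        _ = Real.pi := by rw [this]
    have hA : Complex.exp (Complex.I * θ * ℓ) ^ (N + 1) = (-1 : ℂ) ^ ℓ := by
      rw [← Complex.exp_nat_mul]
      have : ((N + 1 : ℕ) : ℂ) * (Complex.I * θ * ℓ) = (ℓ : ℂ) * ((θ : ℂ) * (N + 1) * Complex.I) := by
        push_cast; ring
      rw [this, hπ, Complex.exp_nat_mul, Complex.exp_pi_mul_I]
    have hB : Complex.exp (-(Complex.I * θ * ℓ)) ^ (N + 1) = (-1 : ℂ) ^ ℓ := by
      rw [← Complex.exp_nat_mul]
      have : ((N + 1 : ℕ) : ℂ) * -(Complex.I * θ * ℓ) = -((ℓ : ℂ) * ((θ : ℂ) * (N + 1) * Complex.I)) := by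
        push_cast; ring
      rw [this, hπ, Complex.exp_neg, Complex.exp_nat_mul, Complex.exp_pi_mul_I]
      norm_num [← inv_pow]
    have hzz : z₁ ^ (N + 1) = z₂ ^ (N + 1) := by
      rw [hz₁, hz₂, mul_pow, mul_pow, hA, hB]
    rw [hψ, inv_pow, inv_pow, hzz]
    simp
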